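/- Define τ_{m,j} := ∑_{β ≥ 0, j+2β ≤ m} γ_{m,j+2β} for j ∈ {1,...,m}, where γ_{m,j} := (-1)^{j-1}(2/j)C(2m,m+j)/C(2m,m). Then ∑_{β = 1−m}^{m−1} τ_{m,1+|β|} = 1. -/

import Mathlib

noncomputable def gam (m j : ℕ) : ℝ :=
  (-1) ^ (j - 1) * (2 / j) * (Nat.choose (2 * m) (m + j)) / (Nat.choose (2 * m) m)

noncomputable def tau (m j : ℕ) : ℝ :=
  ∑ β ∈ Finset.range (m + 1), if j + 2 * β ≤ m then gam m (j + 2 * β) else 0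

lemma partial_alt (n r : ℕ) :
    ∑ j ∈ Finset.Icc 1 r, (-1 : ℤ) ^ (j - 1) * (Nat.choose (2 * n + 2) (n + 1 + j)) =
      (Nat.choose (2 * n + 1) (n + 1) : ℤ) +
        (-1) ^ (r + 1) * (Nat.choose (2 * n + 1) (n + 1 + r)) := by
  induction r with
  | zero => simp
  | succ r ih =>
    rw [Finset.sum_Icc_succ_top (by omega : 1 ≤ r + 1), ih]
    have hpascal : Nat.choose (2 * n + 2) (n + 1 + (r + 1)) =
        Nat.choose (2 * n + 1) (n + 1 + r) + Nat.choose (2 * n + 1) (n + 1 + r + 1) := by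
      rw [show 2 * n + 2 = (2 * n + 1) + 1 by ring, show n + 1 + (r + 1) = (n + 1 + r) + 1 by ring]
      exact Nat.choose_succ_succ' _ _
    rw [hpascal, show r + 1 - 1 = r from rfl]
    push_cast
    ring

lemma half_choose (n : ℕ) :
    Nat.choose (2 * n + 2) (n + 1) = 2 * Nat.choose (2 * n + 1) (n + 1) := by
  have hsymm : Nat.choose (2 * n + 1) n = Nat.choose (2 * n + 1) (n + 1) := by
    have h := Nat.choose_symm (show n + 1 ≤ 2 * n + 1 by omega)
    rw [show 2 * n + 1 - (n + 1) = n by omega] at h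
    exact h
  rw [show 2 * n + 2 = (2 * n + 1) + 1 by ring, Nat.choose_succ_succ', hsymm]
  ring

lemma sum_jgam (m : ℕ) (hm : 1 ≤ m) :
    ∑ j ∈ Finset.Icc 1 m, (j : ℝ) * gam m j = 1 := by
  obtain ⟨n, rfl⟩ : ∃ n, m = n + 1 := ⟨m - 1, by omega⟩
  have h2m : 2 * (n + 1) = 2 * n + 2 := by ring
  have key : ∑ j ∈ Finset.Icc 1 (n + 1), (-1 : ℤ) ^ (j - 1) *
      (Nat.choose (2 * n + 2) (n + 1 + j)) = (Nat.choose (2 * n + 1) (n + 1) : ℤ) := by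
    rw [partial_alt n (n + 1)]
    have : Nat.choose (2 * n + 1) (n + 1 + (n + 1)) = 0 := Nat.choose_eq_zero_of_lt (by omega)
    rw [this]
    push_cast; ring
  have hC : (0 : ℝ) < (Nat.choose (2 * n + 1) (n + 1) : ℝ) := by
    exact_mod_cast Nat.choose_pos (by omega)
  have expand : ∀ j ∈ Finset.Icc 1 (n + 1), (j : ℝ) * gam (n + 1) j =
      ((-1 : ℝ) ^ (j - 1) * (Nat.choose (2 * n + 2) (n + 1 + j))) *
        (2 / (Nat.choose (2 * n + 2) (n + 1))) := by
    intro j hj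
    simp only [Finset.mem_Icc] at hj
    have hj0 : (j : ℝ) ≠ 0 := by exact_mod_cast Nat.one_le_iff_ne_zero.mp hj.1
    unfold gam
    rw [h2m]
    have hCne : (Nat.choose (2 * n + 2) (n + 1) : ℝ) ≠ 0 := by
      have : 0 < Nat.choose (2 * n + 2) (n + 1) := Nat.choose_pos (by omega)
      exact_mod_cast this.ne'
    field_simp
  rw [Finset.sum_congr rfl expand, ← Finset.sum_mul]
  have key' : ∑ j ∈ Finset.Icc 1 (n + 1), (-1 : ℝ) ^ (j - 1) *
      (Nat.choose (2 * n + 2) (n + 1 + j)) = (Nat.choose (2 * n + 1) (n + 1) : ℝ) := by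
    exact_mod_cast key
  rw [key']
  have hhalf : (Nat.choose (2 * n + 2) (n + 1) : ℝ) =
      2 * (Nat.choose (2 * n + 1) (n + 1) : ℝ) := by exact_mod_cast half_choose n
  have hne : (Nat.choose (2 * n + 1) (n + 1) : ℝ) ≠ 0 := hC.ne'
  rw [hhalf]
  field_simp

theorem stmt10 (m : ℕ) (hm : 1 ≤ m) :
    ∑ β ∈ Finset.Icc (1 - (m : ℤ)) ((m : ℤ) - 1), tau m (1 + β.natAbs) = 1 := by
  have step1 : ∑ β ∈ Finset.Icc (1 - (m : ℤ)) ((m : ℤ) - 1), tau m (1 + β.natAbs) =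
      ∑ p ∈ ((Finset.Icc (1 - (m : ℤ)) ((m : ℤ) - 1)) ×ˢ Finset.range (m + 1)).filter
        (fun p => 1 + p.1.natAbs + 2 * p.2 ≤ m), gam m (1 + p.1.natAbs + 2 * p.2) := by
    simp only [tau]
    rw [← Finset.sum_product']
    rw [Finset.sum_filter]
  rw [step1]
  have step2 : ∑ p ∈ ((Finset.Icc (1 - (m : ℤ)) ((m : ℤ) - 1)) ×ˢ Finset.range (m + 1)).filter
        (fun p => 1 + p.1.natAbs + 2 * p.2 ≤ m), gam m (1 + p.1.natAbs + 2 * p.2) =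
      ∑ q ∈ (Finset.Icc 1 m).sigma (fun j => Finset.range j), gam m q.1 := by
    apply Finset.sum_nbij'
      (i := fun p => (⟨1 + p.1.natAbs + 2 * p.2, if 0 ≤ p.1 then 2 * p.2 else 2 * p.2 + 1⟩ :
        Σ _ : ℕ, ℕ))
      (j := fun q => ((if q.2 % 2 = 0 then (q.1 : ℤ) - 1 - q.2 else (q.2 : ℤ) - q.1), q.2 / 2))
    · intro p hp
      simp only [Finset.mem_filter, Finset.mem_product, Finset.mem_Icc, Finset.mem_range] at hp
      simp only [Finset.mem_sigma, Finset.mem_Icc, Finset.mem_range]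
      constructor
      · omega
      · split <;> omega
    · intro q hq
      simp only [Finset.mem_sigma, Finset.mem_Icc, Finset.mem_range] at hq
      simp only [Finset.mem_filter, Finset.mem_product, Finset.mem_Icc, Finset.mem_range]
      split <;> omega
    · rintro ⟨a, b⟩ hp
      simp only [Finset.mem_filter, Finset.mem_product, Finset.mem_Icc, Finset.mem_range] at hp
      by_cases h : 0 ≤ a
      · simp only [if_pos h]
        have h2 : (2 * b) % 2 = 0 := by omega
        simp only [if_pos h2, Prod.mk.injEq]
        refine ⟨by omega, by omega⟩
      · simp only [if_neg h]
        have h2 : ¬ ((2 * b + 1) % 2 = 0) := by omega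
        simp only [if_neg h2, Prod.mk.injEq]
        refine ⟨by omega, by omega⟩
    · rintro ⟨j, i⟩ hq
      simp only [Finset.mem_sigma, Finset.mem_Icc, Finset.mem_range] at hq
      by_cases h : i % 2 = 0
      · simp only [if_pos h]
        have hnn : (0 : ℤ) ≤ (j : ℤ) - 1 - i := by omega
        rw [if_pos hnn]
        refine Sigma.ext ?_ (heq_of_eq ?_) <;> dsimp only <;> omega
      · simp only [if_neg h]
        have hneg : ¬ ((0 : ℤ) ≤ (i : ℤ) - j) := by omega
        rw [if_neg hneg]
        refine Sigma.ext ?_ (heq_of_eq ?_) <;> dsimp only <;> omega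
    · intro p hp
      rfl
  rw [step2, Finset.sum_sigma]
  simp only [Finset.sum_const, Finset.card_range, nsmul_eq_mul]
  exact sum_jgam m hm
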